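/- arXiv:2203.12638 — 2 statements merged into one kernel-verified Lean document; each statement's English description precedes it below -/
import Mathlib

section
/- Let G be a finitely generated group with finite generating set X, relatively finitely presented with respect to H_Λ = {H_λ : λ ∈ Λ}. If w is a regular word over X ∪ 𝓗, then every λ-syllable of w is isolated in w and consists of a single letter. -/
namespace RelPres

variable {G : Type*} [Group G] {Λ : Type*}

/-- A letter of the alphabet `X ∪ 𝓗`, where `𝓗 = ⋃ l, (H̃ l \ {1})` consists of the
nontrivial elements of pairwise disjoint copies of the peripheral subgroups `H l`. -/
def Letter (H : Λ → Subgroup G) (X : Set G) : Type _ :=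
  {x : G // x ∈ X} ⊕ (Σ l : Λ, {h : G // h ∈ H l ∧ h ≠ 1})

variable {H : Λ → Subgroup G} {X : Set G}

/-- The element of `G` represented by a letter. -/
def Letter.val : Letter H X → G
  | Sum.inl x => x.1
  | Sum.inr p => p.2.1

/-- The peripheral type of a letter: `none` for letters from `X`, `some l` for letters
from the copy `H̃ l` of `H l`. -/
def Letter.ltype : Letter H X → Option Λ
  | Sum.inl _ => none
  | Sum.inr p => some p.1

/-- The element of `G` represented by a word over `X ∪ 𝓗`. -/
def evalWord (w : List (Letter H X)) : G := (w.map Letter.val).prod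

/-- The free product `F = (∗_λ H̃_λ) ∗ F(X)`. -/
abbrev RelFree (H : Λ → Subgroup G) (X : Set G) :=
  Monoid.Coprod (Monoid.CoprodI fun l : Λ => ↥(H l)) (FreeGroup {x : G // x ∈ X})

/-- The canonical homomorphism `ε : F → G`. -/
def eps (H : Λ → Subgroup G) (X : Set G) : RelFree H X →* G :=
  Monoid.Coprod.lift (Monoid.CoprodI.lift fun l => (H l).subtype)
    (FreeGroup.lift Subtype.val)

/-- The canonical image of a letter in `F`. -/
def Letter.toF : Letter H X → RelFree H X
  | Sum.inl x => Monoid.Coprod.inr (FreeGroup.of x)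
  | Sum.inr p => Monoid.Coprod.inl (Monoid.CoprodI.of (⟨p.2.1, p.2.2.1⟩ : H p.1))

/-- The image in `F` of a word over `X ∪ 𝓗`. -/
def wordToF (w : List (Letter H X)) : RelFree H X := (w.map Letter.toF).prod

/-- `g` is a product (in `F`) of `k` conjugates of elements of `R ∪ R⁻¹`. -/
def IsConjProd {F : Type*} [Group F] (R : Set F) (k : ℕ) (g : F) : Prop :=
  ∃ f r : Fin k → F, (∀ i, r i ∈ R ∨ (r i)⁻¹ ∈ R) ∧
    g = (List.ofFn fun i => (f i)⁻¹ * r i * f i).prod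

/-- `⟨X, 𝓗 ∣ 𝓢, R⟩` is a finite relative presentation of `G` with respect to the
collection of peripheral subgroups `H`: `X` is a finite symmetric relative generating
set, `R` is finite and its normal closure in `F` is the kernel of `ε`. -/
def FinRelPres (H : Λ → Subgroup G) (X : Set G) (R : Set (RelFree H X)) : Prop :=
  X.Finite ∧ (∀ x ∈ X, x⁻¹ ∈ X) ∧ Function.Surjective (eps H X) ∧
    R.Finite ∧ Subgroup.normalClosure R = (eps H X).ker

/-- The relative Dehn function of the presentation is well-defined: for each `ℓ` there
is a uniform bound `D` on the number of conjugates of relators needed to express any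
word of length at most `ℓ` over `X ∪ 𝓗` representing `1` in `G`. -/
def WellDefinedDehn (H : Λ → Subgroup G) (X : Set G) (R : Set (RelFree H X)) : Prop :=
  ∀ ℓ : ℕ, ∃ D : ℕ, ∀ w : List (Letter H X), w.length ≤ ℓ → evalWord w = 1 →
    ∃ k ≤ D, IsConjProd R k (wordToF w)

/-- The relative Dehn function of the presentation is bounded above by a linear
function, i.e. `G` is hyperbolic relative to the collection `H`. -/
def LinearDehn (H : Λ → Subgroup G) (X : Set G) (R : Set (RelFree H X)) : Prop :=
  ∃ C : ℕ, 0 < C ∧ ∀ w : List (Letter H X), evalWord w = 1 →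
    ∃ k ≤ C * w.length, IsConjProd R k (wordToF w)

/-- Word length of `g ∈ G` with respect to the alphabet `X ∪ 𝓗`, i.e. the distance
from `1` to `g` in the relative Cayley graph `Γ(G, X ∪ 𝓗)`. -/
noncomputable def relLen (H : Λ → Subgroup G) (X : Set G) (g : G) : ℕ :=
  sInf {n : ℕ | ∃ w : List (Letter H X), w.length = n ∧ evalWord w = g}

/-- A subset of `G` is bounded (has finite diameter) in the relative Cayley graph
`Γ(G, X ∪ 𝓗)`. -/
def BoundedIn (H : Λ → Subgroup G) (X : Set G) (S : Set G) : Prop :=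
  ∃ N : ℕ, ∀ a ∈ S, ∀ b ∈ S, relLen H X (a⁻¹ * b) ≤ N

/-- `g` is loxodromic: `n ↦ gⁿ` is a quasiisometric embedding of `ℤ` into the relative
Cayley graph `Γ(G, X ∪ 𝓗)`. -/
def Loxodromic (H : Λ → Subgroup G) (X : Set G) (g : G) : Prop :=
  ∃ C : ℝ, 1 ≤ C ∧ ∀ m n : ℤ,
    (relLen H X ((g ^ m)⁻¹ * g ^ n) : ℝ) ≤ C * |(m : ℝ) - (n : ℝ)| + C ∧
    C⁻¹ * |(m : ℝ) - (n : ℝ)| - C ≤ (relLen H X ((g ^ m)⁻¹ * g ^ n) : ℝ)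

/-- Exactly one of three propositions holds. -/
def ExactlyOne (P Q R : Prop) : Prop :=
  (P ∧ ¬Q ∧ ¬R) ∨ (¬P ∧ Q ∧ ¬R) ∨ (¬P ∧ ¬Q ∧ R)

/-- `K` is conjugate in `G` to a subgroup of some peripheral subgroup `H l`. -/
def ConjIntoPeripheral (H : Λ → Subgroup G) (K : Subgroup G) : Prop :=
  ∃ g : G, ∃ l : Λ, ∀ k ∈ K, g * k * g⁻¹ ∈ H l

/-- Adjacency in the relative Cayley graph `Γ(G, X ∪ 𝓗)`: two distinct vertices are
adjacent iff they differ by a letter of the alphabet. -/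
def cayAdj (H : Λ → Subgroup G) (X : Set G) (a b : G) : Prop :=
  a ≠ b ∧ ∃ s : Letter H X, a * Letter.val s = b ∨ b * Letter.val s = a

/-- A word over `X ∪ 𝓗` is regular: a path labelled by it has a regular neighbourhood
in `Γ(G, X ∪ 𝓗)`, i.e. whenever two of the traversed vertices coincide or are joined
by an edge, their positions along the path differ by at most `1`. -/
def RegularWord (H : Λ → Subgroup G) (X : Set G) (w : List (Letter H X)) : Prop :=
  ∀ i j : ℕ, i ≤ w.length → j ≤ w.length →
    (evalWord (w.take i) = evalWord (w.take j) ∨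
      cayAdj H X (evalWord (w.take i)) (evalWord (w.take j))) →
    Nat.dist i j ≤ 1

/-- The alternating growth condition for a sequence of words over `X ∪ 𝓗`:
(0) all words have the same length `ℓ ≥ 2`;
(I) an index carrying a letter of `X` carries the same letter in every word;
(II) an index carrying a letter of `H̃ l` carries letters of `H̃ l` in every word;
(III) the first index is not of type `X`;
(IV) two consecutive indices are never of the same type;
(V) if an index is of type `l`, the element represented by its letter lies in no other
peripheral subgroup, and every word over `X` representing it has length at least `n`;
(VI) each word is regular with respect to `X ∪ 𝓗`. -/
def AGC (H : Λ → Subgroup G) (X : Set G) (w : ℕ → List (Letter H X)) : Prop :=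
  (∃ ℓ : ℕ, 2 ≤ ℓ ∧ ∀ n, (w n).length = ℓ) ∧
  (∀ i n m : ℕ, ∀ x : {x : G // x ∈ X},
    (w n)[i]? = some (Sum.inl x) → (w m)[i]? = some (Sum.inl x)) ∧
  (∀ i n m : ℕ, ∀ a b : Letter H X, ∀ l : Λ, (w n)[i]? = some a → (w m)[i]? = some b →
    Letter.ltype a = some l → Letter.ltype b = some l) ∧
  (∀ n : ℕ, ∀ a : Letter H X, (w n)[0]? = some a → Letter.ltype a ≠ none) ∧
  (∀ i n : ℕ, ∀ a b : Letter H X, (w n)[i]? = some a → (w n)[i+1]? = some b →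
    Letter.ltype a ≠ Letter.ltype b) ∧
  (∀ i n : ℕ, ∀ a : Letter H X, ∀ l : Λ, (w n)[i]? = some a → Letter.ltype a = some l →
    (∀ μ : Λ, μ ≠ l → Letter.val a ∉ H μ) ∧
    (∀ u : List G, (∀ g ∈ u, g ∈ X) → u.prod = Letter.val a → n ≤ u.length)) ∧
  (∀ n, RegularWord H X (w n))

/-- Word length of `g` over `S ∪ S⁻¹` (with value `⊤` if `g` is not a product of such
elements). -/
noncomputable def wlen (S : Set G) (g : G) : ℕ∞ :=
  sInf {n : ℕ∞ | ∃ w : List G, (∀ a ∈ w, a ∈ S ∨ a⁻¹ ∈ S) ∧ w.prod = g ∧ (w.length : ℕ∞) = n}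

/-- The relative growth function `β^S_K` of a subgroup `K ≤ G` with respect to `S`:
the number of elements of `K` represented by words of length at most `n` over
`S ∪ S⁻¹`. -/
noncomputable def relGrowth (S : Set G) (K : Subgroup G) (n : ℕ) : ℕ :=
  {g : G | g ∈ K ∧ wlen S g ≤ (n : ℕ∞)}.ncard

/-- The subgroup `K`, viewed as an abstract group, has subexponential growth: for every
finite generating set of `K` and every `a > 1`, `β(n)/aⁿ → 0`. -/
def HasSubexpGrowth (K : Subgroup G) : Prop :=
  ∀ Z : Finset G, (Z : Set G) ⊆ K → Subgroup.closure (Z : Set G) = K →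
    ∀ a : ℝ, 1 < a →
      Filter.Tendsto (fun n => (relGrowth (Z : Set G) K n : ℝ) / a ^ n)
        Filter.atTop (nhds 0)

end RelPres

namespace RelPres

variable {G : Type*} [Group G] {Λ : Type*} {H : Λ → Subgroup G} {X : Set G}

theorem evalWord_append (a b : List (Letter H X)) :
    evalWord (a ++ b) = evalWord a * evalWord b := by
  simp [evalWord]

theorem Letter.val_mem_of_ltype {a : Letter H X} {l : Λ}
    (h : Letter.ltype a = some l) : Letter.val a ∈ H l := by
  cases a with
  | inl x => simp [Letter.ltype] at h
  | inr p =>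
    simp [Letter.ltype] at h
    subst h
    exact p.2.2.1

theorem regular_dist_le {w : List (Letter H X)} (hw : RegularWord H X w) {l : Λ}
    {i j : ℕ} (hi : i ≤ w.length) (hj : j ≤ w.length)
    (h : (evalWord (w.take i))⁻¹ * evalWord (w.take j) ∈ H l) :
    Nat.dist i j ≤ 1 := by
  set p := evalWord (w.take i) with hp
  set q := evalWord (w.take j) with hq
  by_cases hpq : p = q
  · exact hw i j hi hj (Or.inl hpq)
  · refine hw i j hi hj (Or.inr ⟨hpq, Sum.inr ⟨l, ⟨p⁻¹ * q, h, ?_⟩⟩, Or.inl ?_⟩)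
    · intro h1
      exact hpq (by rw [← inv_mul_cancel p] at h1; exact (mul_left_cancel h1).symm ▸ rfl)
    · show p * (p⁻¹ * q) = q
      group

end RelPres

open RelPres in
/-- **Syllables of regular words are single isolated letters.**
Let `G` be a finitely generated group with finite generating set `X`, relatively
finitely presented with respect to `H`.  If `w` is a regular word over `X ∪ 𝓗`, then
every `l`-syllable of `w` (a nonempty maximal block `v` of `H̃ l`-letters, written
`w = u₁ ++ v ++ u₂` where the adjacent letters of `u₁`, `u₂` are not `H̃ l`-letters)
consists of a single letter and is isolated in `w`: for every other `l`-syllable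
`w = u₁' ++ v' ++ u₂'` (occurring at a different position), the vertices of the
corresponding components of a path labelled by `w` lie in different left cosets
of `H l`, so the two components are not connected by a path labelled by
`H̃ l`-letters. -/
theorem regularWord_syllables_isolated_single_letter
    {G : Type*} [Group G] {Λ : Type*} (hG : Group.FG G)
    (H : Λ → Subgroup G) (X : Set G) (hXgen : Subgroup.closure X = ⊤)
    (R : Set (RelFree H X)) (hpres : FinRelPres H X R)
    (w : List (Letter H X)) (hw : RegularWord H X w) (l : Λ)
    (u₁ v u₂ : List (Letter H X)) (hsplit : w = u₁ ++ v ++ u₂) (hv : v ≠ [])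
    (hvl : ∀ a ∈ v, Letter.ltype a = some l)
    (hmax₁ : ∀ a : Letter H X, u₁.getLast? = some a → Letter.ltype a ≠ some l)
    (hmax₂ : ∀ a : Letter H X, u₂.head? = some a → Letter.ltype a ≠ some l) :
    v.length = 1 ∧
    ∀ u₁' v' u₂' : List (Letter H X), w = u₁' ++ v' ++ u₂' → v' ≠ [] →
      (∀ a ∈ v', Letter.ltype a = some l) →
      (∀ a : Letter H X, u₁'.getLast? = some a → Letter.ltype a ≠ some l) →
      (∀ a : Letter H X, u₂'.head? = some a → Letter.ltype a ≠ some l) →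
      u₁'.length ≠ u₁.length →
      (evalWord u₁)⁻¹ * evalWord u₁' ∉ H l := by
  classical
  have htake : w.take u₁.length = u₁ := by
    rw [hsplit, List.append_assoc]; exact List.take_left
  have hwlen : w.length = u₁.length + v.length + u₂.length := by simp [hsplit]; omega
  have hlen1 : v.length = 1 := by
    rcases v with _ | ⟨a, v'⟩
    · exact absurd rfl hv
    rcases v' with _ | ⟨b, t⟩
    · rfl
    exfalso
    have htake2 : w.take (u₁.length + 2) = u₁ ++ [a, b] := by
      rw [hsplit, List.append_assoc, List.take_append]
      simp
    have hmem : (evalWord (w.take u₁.length))⁻¹ * evalWord (w.take (u₁.length + 2)) ∈ H l := by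
      rw [htake, htake2, evalWord_append, inv_mul_cancel_left]
      have hab : evalWord ([a, b] : List (Letter H X)) = Letter.val a * Letter.val b := by
        simp [evalWord]
      rw [hab]
      exact mul_mem (Letter.val_mem_of_ltype (hvl a (by simp)))
        (Letter.val_mem_of_ltype (hvl b (by simp)))
    have hd := regular_dist_le hw (by simp at hwlen ⊢; omega) (by simp at hwlen ⊢; omega) hmem
    simp [Nat.dist] at hd
  refine ⟨hlen1, ?_⟩
  intro u₁' v' u₂' hsplit' hv' hvl' hmax₁' hmax₂' hne hmem
  have htake' : w.take u₁'.length = u₁' := by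
    rw [hsplit', List.append_assoc]; exact List.take_left
  have hwlen' : w.length = u₁'.length + v'.length + u₂'.length := by simp [hsplit']; omega
  have hmem' : (evalWord (w.take u₁.length))⁻¹ * evalWord (w.take u₁'.length) ∈ H l := by
    rw [htake, htake']; exact hmem
  have hd := regular_dist_le hw (by omega) (by omega) hmem'
  have hcase : u₁'.length = u₁.length + 1 ∨ u₁.length = u₁'.length + 1 := by
    simp [Nat.dist] at hd; omega
  rcases hcase with hA | hB
  · rcases List.exists_cons_of_ne_nil hv with ⟨c, v0, rfl⟩
    have h1 : w[u₁.length]? = some c := by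
      rw [hsplit, List.append_assoc, List.getElem?_append_right le_rfl]
      simp
    have h2 : u₁'.getLast? = some c := by
      rw [u₁'.getLast?_eq_getElem?, hA, Nat.add_sub_cancel, ← h1, hsplit',
        List.append_assoc, List.getElem?_append_left (by omega)]
    exact hmax₁' c h2 (hvl c (by simp))
  · rcases List.exists_cons_of_ne_nil hv' with ⟨c, v0, rfl⟩
    have h1 : w[u₁'.length]? = some c := by
      rw [hsplit', List.append_assoc, List.getElem?_append_right le_rfl]
      simp
    have h2 : u₁.getLast? = some c := by
      rw [u₁.getLast?_eq_getElem?, hB, Nat.add_sub_cancel, ← h1, hsplit,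
        List.append_assoc, List.getElem?_append_left (by omega)]
    exact hmax₁ c h2 (hvl' c (by simp))
end

section
/- Let G be a finitely generated group with finite generating set X, and let H ≤ G be a finitely generated subgroup that is undistorted in G and has subexponential growth. Then for every subgroup K ≤ H, the relative exponential growth rate of K in G with respect to X exists and equals 1, i.e., lim_{n→∞} (β^X_K(n))^{1/n} = 1. -/
variable {G : Type*} [Group G]

/-- Word length of `g` over `S ∪ S⁻¹` (with value `⊤` if `g` is not a product of such
elements). -/
noncomputable def wlen (S : Set G) (g : G) : ℕ∞ :=
  sInf {n : ℕ∞ | ∃ w : List G, (∀ a ∈ w, a ∈ S ∨ a⁻¹ ∈ S) ∧ w.prod = g ∧ (w.length : ℕ∞) = n}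

/-- The relative growth function `β^S_K` of a subgroup `K ≤ G` with respect to `S`:
the number of elements of `K` represented by words of length at most `n` over
`S ∪ S⁻¹`. -/
noncomputable def relGrowth (S : Set G) (K : Subgroup G) (n : ℕ) : ℕ :=
  {g : G | g ∈ K ∧ wlen S g ≤ (n : ℕ∞)}.ncard

lemma wlen_le_iff (S : Set G) (g : G) (n : ℕ) :
    wlen S g ≤ (n : ℕ∞) ↔
      ∃ w : List G, (∀ a ∈ w, a ∈ S ∨ a⁻¹ ∈ S) ∧ w.prod = g ∧ w.length ≤ n := by
  constructor
  · intro h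
    by_contra hc
    push_neg at hc
    have h2 : ((n + 1 : ℕ) : ℕ∞) ≤ wlen S g := by
      apply le_sInf
      rintro m ⟨w, hw, hp, rfl⟩
      exact_mod_cast Nat.succ_le_of_lt (hc w hw hp)
    have := h2.trans h
    exact absurd (by exact_mod_cast this) (Nat.not_succ_le_self n)
  · rintro ⟨w, hw, hp, hl⟩
    calc wlen S g ≤ (w.length : ℕ∞) := sInf_le ⟨w, hw, hp, rfl⟩
    _ ≤ (n : ℕ∞) := by exact_mod_cast hl

lemma finite_wlen_le (S : Set G) (hS : S.Finite) (n : ℕ) :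
    {g : G | wlen S g ≤ (n : ℕ∞)}.Finite := by
  induction n with
  | zero =>
    apply Set.Finite.subset (Set.finite_singleton (1 : G))
    intro g hg
    rw [Set.mem_setOf_eq, wlen_le_iff] at hg
    obtain ⟨w, hw, hp, hl⟩ := hg
    have hw0 : w = [] := List.length_eq_zero_iff.mp (Nat.le_zero.mp hl)
    simp [hw0] at hp
    simp [← hp]
  | succ n ih =>
    apply Set.Finite.subset (((hS.union hS.inv).insert 1).mul ih)
    intro g hg
    rw [Set.mem_setOf_eq, wlen_le_iff] at hg
    obtain ⟨w, hw, hp, hl⟩ := hg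
    match w with
    | [] =>
      refine ⟨1, by simp, 1, ?_, by simpa using hp⟩
      exact (wlen_le_iff S 1 n).mpr ⟨[], by simp, by simp, by simp⟩
    | a :: t =>
      refine ⟨a, ?_, t.prod, ?_, by simpa using hp⟩
      · rcases hw a (List.mem_cons_self) with h | h
        · exact Set.mem_insert_iff.mpr (Or.inr (Or.inl h))
        · exact Set.mem_insert_iff.mpr (Or.inr (Or.inr (Set.mem_inv.mpr h)))
      · exact (wlen_le_iff S t.prod n).mpr
          ⟨t, fun b hb => hw b (List.mem_cons_of_mem a hb), rfl,
            by simpa using Nat.lt_succ_iff.mp (Nat.lt_of_lt_of_le (by simp) hl)⟩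

/-- **Relative growth rates of subgroups of undistorted subgroups of subexponential
growth.**
Let `G` be a finitely generated group with finite generating set `X`, and let `H ≤ G`
be a finitely generated subgroup (with finite generating set `Y`) that is undistorted
in `G` (there is `C > 0` with `|h|_Y ≤ C·|h|_X` for all `h ∈ H`) and has
subexponential growth (for every finite generating set `Z` of `H` and every `a > 1`,
`β^Z_H(n)/aⁿ → 0`).  Then for every subgroup `K ≤ H`, the relative exponential growth
rate of `K` in `G` with respect to `X` exists and equals `1`:
`lim_{n → ∞} (β^X_K(n))^(1/n) = 1`. -/
theorem relative_growth_rate_one_of_undistorted_subexponential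
    (X : Finset G) (hX : Subgroup.closure (X : Set G) = ⊤)
    (H : Subgroup G) (Y : Finset G) (hYH : (Y : Set G) ⊆ H)
    (hYgen : Subgroup.closure (Y : Set G) = H)
    (hundist : ∃ C : ℕ, 0 < C ∧ ∀ h ∈ H,
      wlen (Y : Set G) h ≤ (C : ℕ∞) * wlen (X : Set G) h)
    (hsubexp : ∀ Z : Finset G, (Z : Set G) ⊆ H → Subgroup.closure (Z : Set G) = H →
      ∀ a : ℝ, 1 < a →
        Filter.Tendsto (fun n : ℕ => (relGrowth (Z : Set G) H n : ℝ) / a ^ n)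
          Filter.atTop (nhds 0))
    (K : Subgroup G) (hK : K ≤ H) :
    Filter.Tendsto (fun n : ℕ => (relGrowth (X : Set G) K n : ℝ) ^ (1 / (n : ℝ)))
      Filter.atTop (nhds 1) := by
  obtain ⟨C, hC, hdist⟩ := hundist
  have hone : ∀ n : ℕ, 1 ≤ relGrowth (X : Set G) K n := by
    intro n
    have hfin : {g : G | g ∈ K ∧ wlen (X : Set G) g ≤ (n : ℕ∞)}.Finite :=
      (finite_wlen_le (X : Set G) X.finite_toSet n).subset (fun g hg => hg.2)
    have hmem : (1 : G) ∈ {g : G | g ∈ K ∧ wlen (X : Set G) g ≤ (n : ℕ∞)} :=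
      ⟨K.one_mem, (wlen_le_iff _ _ _).mpr ⟨[], by simp, by simp, by simp⟩⟩
    exact (Set.ncard_pos hfin).mpr ⟨1, hmem⟩
  have hcompare : ∀ n : ℕ, relGrowth (X : Set G) K n ≤ relGrowth (Y : Set G) H (C * n) := by
    intro n
    apply Set.ncard_le_ncard
    · rintro g ⟨hgK, hg⟩
      refine ⟨hK hgK, ?_⟩
      calc wlen (Y : Set G) g ≤ (C : ℕ∞) * wlen (X : Set G) g := hdist g (hK hgK)
      _ ≤ (C : ℕ∞) * (n : ℕ∞) := mul_le_mul_right hg _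
      _ = ((C * n : ℕ) : ℕ∞) := by push_cast; ring
    · exact (finite_wlen_le (Y : Set G) Y.finite_toSet (C * n)).subset (fun g hg => hg.2)
  rw [tendsto_order]
  constructor
  · intro b hb
    filter_upwards [Filter.eventually_ge_atTop 1] with n hn
    have h1 : (1 : ℝ) ≤ (relGrowth (X : Set G) K n : ℝ) := by exact_mod_cast hone n
    have h2 : (1 : ℝ) ≤ (relGrowth (X : Set G) K n : ℝ) ^ (1 / (n : ℝ)) := by
      calc (1 : ℝ) = (1 : ℝ) ^ (1 / (n : ℝ)) := (Real.one_rpow _).symm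
      _ ≤ _ := Real.rpow_le_rpow zero_le_one h1 (by positivity)
    linarith
  · intro b hb
    set b' : ℝ := (1 + b) / 2 with hb'def
    have hb' : 1 < b' := by rw [hb'def]; linarith
    have hb'b : b' < b := by rw [hb'def]; linarith
    set a : ℝ := b' ^ (1 / (C : ℝ)) with hadef
    have hCpos : (0 : ℝ) < (C : ℝ) := by exact_mod_cast hC
    have ha : 1 < a := by
      rw [hadef]
      exact (Real.one_lt_rpow_iff_of_pos (by linarith)).mpr (Or.inl ⟨hb', by positivity⟩)
    have ha0 : (0 : ℝ) < a := lt_trans one_pos ha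
    have haC : a ^ ((C : ℕ) : ℝ) = b' := by
      rw [hadef, ← Real.rpow_mul (by linarith : (0:ℝ) ≤ b')]
      rw [one_div_mul_cancel (ne_of_gt hCpos), Real.rpow_one]
    have htd := hsubexp Y hYH hYgen a ha
    have hev : ∀ᶠ m in Filter.atTop, (relGrowth (Y : Set G) H m : ℝ) ≤ a ^ m := by
      filter_upwards [htd.eventually_lt_const one_pos] with m hm
      have hpow : (0 : ℝ) < a ^ m := pow_pos ha0 m
      exact le_of_lt ((div_lt_one hpow).mp hm)
    obtain ⟨N, hN⟩ := Filter.eventually_atTop.mp hev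
    filter_upwards [Filter.eventually_ge_atTop (max N 1)] with n hn
    have hn1 : 1 ≤ n := le_trans (le_max_right N 1) hn
    have hnN : N ≤ n := le_trans (le_max_left N 1) hn
    have hnR : (0 : ℝ) < (n : ℝ) := by exact_mod_cast hn1
    have hCn : N ≤ C * n := le_trans hnN (Nat.le_mul_of_pos_left n hC)
    have h1 : (relGrowth (X : Set G) K n : ℝ) ≤ a ^ (C * n) :=
      le_trans (by exact_mod_cast hcompare n) (hN (C * n) hCn)
    have h2 : (relGrowth (X : Set G) K n : ℝ) ^ (1 / (n : ℝ)) ≤ b' := by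
      calc (relGrowth (X : Set G) K n : ℝ) ^ (1 / (n : ℝ))
          ≤ (a ^ (C * n)) ^ (1 / (n : ℝ)) :=
            Real.rpow_le_rpow (by positivity) h1 (by positivity)
      _ = a ^ (((C * n : ℕ) : ℝ) * (1 / (n : ℝ))) := by
            rw [← Real.rpow_natCast a (C * n), ← Real.rpow_mul (le_of_lt ha0)]
      _ = a ^ ((C : ℕ) : ℝ) := by
            congr 1
            push_cast
            field_simp
      _ = b' := haC
    exact lt_of_le_of_lt h2 hb'b
end
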